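/- For every α ∈ [1, e/2] and any constants c₁, c₂ > 0, the real number x = (α/c₁)·[log(c₂·e/c₁^α) + log log(c₂/c₁^α)] satisfies c₁·x ≥ log(c₂·x^α), provided c₂/c₁^α ≥ e (so that the double logarithm is well-defined and nonnegative). -/
import Mathlib


open Real

/-- Lemma 18 of Garivier–Kaufmann (2016): for α ∈ [1, e/2] and c₁, c₂ > 0 with
c₂ ≥ e·c₁^α, the value x = (α/c₁)[log(c₂e/c₁^α) + log log(c₂/c₁^α)] satisfies
c₁·x ≥ log(c₂·x^α). -/
theorem garivier_kaufmann_lemma18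
    (α c₁ c₂ : ℝ) (hα1 : 1 ≤ α) (hα2 : α ≤ exp 1 / 2)
    (hc₁ : 0 < c₁) (hc₂ : 0 < c₂) (hbig : exp 1 * c₁ ^ α ≤ c₂)
    (x : ℝ)
    (hx : x = α / c₁ * (log (c₂ * exp 1 / c₁ ^ α) + log (log (c₂ / c₁ ^ α)))) :
    log (c₂ * x ^ α) ≤ c₁ * x := by
  have hα0 : (0:ℝ) < α := lt_of_lt_of_le one_pos hα1
  have hp : (0:ℝ) < c₁ ^ α := rpow_pos_of_pos hc₁ α
  set L : ℝ := log (c₂ / c₁ ^ α) with hLdef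
  have hC : exp 1 ≤ c₂ / c₁ ^ α := (le_div_iff₀ hp).2 (by linarith [hbig])
  have hL1 : 1 ≤ L := by
    have := Real.log_le_log (exp_pos 1) hC
    rwa [log_exp] at this
  have hlogL : 0 ≤ log L := log_nonneg hL1
  have hlogC : log (c₂ * exp 1 / c₁ ^ α) = L + 1 := by
    rw [show c₂ * exp 1 / c₁ ^ α = (c₂ / c₁ ^ α) * exp 1 by ring,
      log_mul (by positivity) (exp_ne_zero 1), log_exp]
  set A : ℝ := 1 + L + log L with hAdef
  have hxA : x = α / c₁ * A := by rw [hx, hlogC]; ring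
  have hA2 : 2 ≤ A := by simp only [hAdef]; linarith
  have hA0 : (0:ℝ) < A := by linarith
  have hx0 : 0 < x := by rw [hxA]; positivity
  have hlogx : log x = log α - log c₁ + log A := by
    rw [hxA, log_mul (by positivity) (ne_of_gt hA0), log_div (ne_of_gt hα0) (ne_of_gt hc₁)]
  have hLval : L = log c₂ - α * log c₁ := by
    rw [hLdef, log_div (ne_of_gt hc₂) (ne_of_gt hp), log_rpow hc₁]
  have hgoal : log (c₂ * x ^ α) = log c₂ + α * log x := by
    rw [log_mul (ne_of_gt hc₂) (by positivity), log_rpow hx0]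
  have hc₁x : c₁ * x = α * A := by
    rw [hxA]; field_simp
  -- key inequalities
  have h1 : log L ≤ L - 1 := by
    have := log_le_sub_one_of_pos (by linarith : (0:ℝ) < L); linarith
  have hA2L : A ≤ 2 * L := by simp only [hAdef]; linarith
  have h2 : log A ≤ log 2 + log L := by
    calc log A ≤ log (2 * L) := Real.log_le_log hA0 hA2L
    _ = log 2 + log L := log_mul two_ne_zero (by linarith)
  have h3 : log 2 + log α ≤ 1 := by
    have h2α : 2 * α ≤ exp 1 := by linarith [hα2]
    have := Real.log_le_log (by linarith : (0:ℝ) < 2 * α) h2α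
    rwa [log_mul two_ne_zero (ne_of_gt hα0), log_exp] at this
  rw [hgoal, hlogx, hc₁x]
  have hexp : log c₂ + α * (log α - log c₁ + log A) = L + α * log α + α * log A := by
    rw [hLval]; ring
  rw [hexp]
  have hαA : α * log A ≤ α * (log 2 + log L) := by nlinarith
  have hα3 : α * (log 2 + log α) ≤ α := by nlinarith
  have hLα : L ≤ α * L := le_mul_of_one_le_left (by linarith) hα1
  have hAA : α * A = α + α * L + α * log L := by rw [hAdef]; ring
  have hexp2 : α * (log 2 + log L) = α * (log 2 + log α) + α * log L - α * log α := by ring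
  linarith
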